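/- Let n be an odd positive integer with n ≥ 3. If x, y ∈ ℝ satisfy H_{n−1}(x) = 0, H_{n−1}(y) = 0 and H_n(x) = H_n(y), then x = y. Consequently, every critical zero of Ψ_n(x,y) = H_n(x) − H_n(y) lies on the diagonal {(x,x) : x ∈ ℝ}. -/
import Mathlib


open Polynomial Real Set

/-- Physicists' Hermite polynomials: `H 0 = 1`, `H 1 = 2X`,
`H (n+2) = 2X * H (n+1) - 2(n+1) * H n`. -/
noncomputable def hermiteH : ℕ → Polynomial ℝ
  | 0 => 1
  | 1 => Polynomial.C 2 * Polynomial.X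
  | (n + 2) => Polynomial.C 2 * Polynomial.X * hermiteH (n + 1)
      - Polynomial.C ((2 * (n + 1) : ℕ) : ℝ) * hermiteH n

/-- `z : Fin m → ℝ` enumerates the zeros of `P` in increasing order. -/
def IsZeroEnum (P : Polynomial ℝ) (m : ℕ) (z : Fin m → ℝ) : Prop :=
  StrictMono z ∧ (∀ i, P.eval (z i) = 0) ∧ (∀ x : ℝ, P.eval x = 0 → ∃ i, x = z i)

/-- The eigenfunction `Φ_n^θ`. -/
noncomputable def Phi (n : ℕ) (θ : ℝ) (p : ℝ × ℝ) : ℝ :=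
  (Real.cos θ * (hermiteH n).eval p.1 + Real.sin θ * (hermiteH n).eval p.2) *
    Real.exp (-(p.1 ^ 2 + p.2 ^ 2) / 2)

/-- A critical zero of `u` : a common zero of `u` and its differential. -/
def IsCriticalZero (u : ℝ × ℝ → ℝ) (p : ℝ × ℝ) : Prop :=
  u p = 0 ∧ fderiv ℝ u p = 0

/-- Nodal set of `u`. -/
def nodalSet (u : ℝ × ℝ → ℝ) : Set (ℝ × ℝ) := {p | u p = 0}

/-- The set of nodal domains of `u`, i.e. of connected components of the
complement of the nodal set. -/
def nodalDomains (u : ℝ × ℝ → ℝ) : Set (Set (ℝ × ℝ)) :=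
  {C | ∃ p, u p ≠ 0 ∧ C = connectedComponentIn {q | u q ≠ 0} p}

/-- `Ψ_n(x,y) = H_n(x) - H_n(y)`. -/
noncomputable def Psi (n : ℕ) (p : ℝ × ℝ) : ℝ :=
  (hermiteH n).eval p.1 - (hermiteH n).eval p.2

lemma hermiteH_zero : hermiteH 0 = 1 := rfl
lemma hermiteH_one : hermiteH 1 = C 2 * X := rfl
lemma hermiteH_add_two (n : ℕ) : hermiteH (n+2) =
    C 2 * X * hermiteH (n + 1) - C ((2 * (n + 1) : ℕ) : ℝ) * hermiteH n := rfl

lemma hermiteH_deriv (n : ℕ) :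
    derivative (hermiteH (n+1)) = C ((2*(n+1):ℕ):ℝ) * hermiteH n := by
  induction n using Nat.twoStepInduction with
  | zero => simp [hermiteH_one, hermiteH_zero]
  | one =>
      rw [show (1:ℕ)+1 = 2 from rfl, hermiteH_add_two, hermiteH_one, hermiteH_zero]
      simp only [derivative_sub, derivative_mul, derivative_C, derivative_X, derivative_one, derivative_ofNat,
        map_natCast, map_ofNat]
      push_cast
      simp only [Polynomial.derivative_ofNat]
      ring
  | more k ih1 ih2 =>
      rw [hermiteH_add_two (k+1)]
      simp only [derivative_sub, derivative_mul, derivative_C, derivative_X, ih1, ih2]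
      rw [hermiteH_add_two k]
      simp only [map_natCast, map_ofNat]
      push_cast
      ring

lemma hermiteH_natDegree_le (n : ℕ) : (hermiteH n).natDegree ≤ n := by
  induction n using Nat.twoStepInduction with
  | zero => simp [hermiteH_zero]
  | one =>
      rw [hermiteH_one]
      refine le_trans (natDegree_mul_le) ?_
      simp
  | more k ih1 ih2 =>
      rw [hermiteH_add_two]
      refine le_trans (natDegree_sub_le _ _) ?_
      refine max_le ?_ ?_
      · refine le_trans (natDegree_mul_le) ?_
        have : (C (2:ℝ) * X).natDegree ≤ 1 := le_trans natDegree_mul_le (by simp)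
        omega
      · exact le_trans (natDegree_C_mul_le _ _) (by omega)

lemma hermiteH_coeff_self (n : ℕ) : (hermiteH n).coeff n = 2 ^ n := by
  induction n using Nat.twoStepInduction with
  | zero => simp [hermiteH_zero]
  | one => simp [hermiteH_one]
  | more k ih1 ih2 =>
      rw [hermiteH_add_two]
      rw [coeff_sub, mul_assoc, coeff_C_mul, coeff_X_mul, coeff_C_mul, ih2,
        coeff_eq_zero_of_natDegree_lt (lt_of_le_of_lt (hermiteH_natDegree_le k) (by omega))]
      ring

lemma hermiteH_ne_zero (n : ℕ) : hermiteH n ≠ 0 := by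
  intro h
  have := hermiteH_coeff_self n
  rw [h] at this
  simp at this
  exact (pow_ne_zero n (two_ne_zero)) this.symm

lemma hermiteH_no_common_zero (n : ℕ) (x : ℝ) :
    ¬ ((hermiteH n).eval x = 0 ∧ (hermiteH (n+1)).eval x = 0) := by
  induction n with
  | zero => simp [hermiteH_zero]
  | succ k ih =>
      rintro ⟨h1, h2⟩
      rw [hermiteH_add_two, eval_sub, eval_mul, eval_mul, h1] at h2
      simp at h2
      rcases h2 with h2 | h2
      · exact absurd h2 (by positivity)
      · exact ih ⟨h2, h1⟩

lemma hermiteH_eval_neg (n : ℕ) (x : ℝ) :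
    (hermiteH n).eval (-x) = (-1)^n * (hermiteH n).eval x := by
  induction n using Nat.twoStepInduction generalizing x with
  | zero => simp [hermiteH_zero]
  | one => simp [hermiteH_one]; try ring
  | more k ih1 ih2 =>
      rw [hermiteH_add_two]
      simp only [eval_sub, eval_mul, eval_C, eval_X, ih1, ih2]
      ring

lemma hermiteH_even_eval_zero (k : ℕ) : (hermiteH (2*k)).eval 0 ≠ 0 := by
  induction k with
  | zero => simp [hermiteH_zero]
  | succ j ih =>
      rw [show 2*(j+1) = 2*j + 2 by ring, hermiteH_add_two]
      simp only [eval_sub, eval_mul, eval_C, eval_X, mul_zero, zero_mul, zero_sub, neg_ne_zero]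
      intro h
      rcases mul_eq_zero.mp h with h | h
      · have : ((2 * (2*j + 1) : ℕ) : ℝ) ≠ 0 := by positivity
        exact this h
      · exact ih h

lemma hermiteH_ode (n : ℕ) :
    derivative (derivative (hermiteH n)) =
      C 2 * X * derivative (hermiteH n) - C ((2*n:ℕ):ℝ) * hermiteH n := by
  match n with
  | 0 => simp [hermiteH_zero]
  | 1 => rw [hermiteH_one]; simp; try ring
  | (m+2) =>
      rw [hermiteH_deriv (m+1), derivative_mul, derivative_C, hermiteH_deriv m,
        hermiteH_add_two m]
      simp only [map_natCast, map_ofNat]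
      push_cast
      ring

noncomputable def Qpoly (n : ℕ) : Polynomial ℝ :=
  C ((2*n:ℕ):ℝ) * (hermiteH n)^2 + (derivative (hermiteH n))^2

lemma Qpoly_deriv (n : ℕ) :
    derivative (Qpoly n) = C 4 * X * (derivative (hermiteH n))^2 := by
  have h := hermiteH_ode n
  unfold Qpoly
  rw [derivative_add, derivative_mul, derivative_C, derivative_pow, derivative_pow, h]
  simp only [map_natCast, map_ofNat]
  push_cast
  ring

lemma Qpoly_mono (n : ℕ) : MonotoneOn (fun t => (Qpoly n).eval t) (Ici (0:ℝ)) := by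
  apply monotoneOn_of_deriv_nonneg (convex_Ici 0)
  · exact (Polynomial.continuous _).continuousOn
  · exact (Polynomial.differentiable _).differentiableOn
  · intro x hx
    rw [interior_Ici] at hx
    rw [Polynomial.deriv, Qpoly_deriv]
    simp only [eval_mul, eval_pow, eval_C, eval_X]
    have : (0:ℝ) < x := hx
    nlinarith [sq_nonneg ((derivative (hermiteH n)).eval x)]

lemma key_lt (m : ℕ) (a b : ℝ) (ha : 0 < a) (hab : a < b)
    (hG : (Qpoly (m+1)).eval a = (Qpoly (m+1)).eval b) : False := by
  have hmono := Qpoly_mono (m+1)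
  have hconst : ∀ t ∈ Icc a b, (Qpoly (m+1)).eval t = (Qpoly (m+1)).eval a := by
    intro t ht
    have h1 : (Qpoly (m+1)).eval a ≤ (Qpoly (m+1)).eval t :=
      hmono (le_of_lt ha) (le_trans (le_of_lt ha) ht.1) ht.1
    have h2 : (Qpoly (m+1)).eval t ≤ (Qpoly (m+1)).eval b :=
      hmono (le_trans (le_of_lt ha) ht.1) (le_of_lt (lt_of_le_of_lt (le_of_lt ha) hab)) ht.2
    rw [← hG] at h2
    exact le_antisymm h2 h1
  have hsub : Ioo a b ⊆ {x | (derivative (hermiteH (m+1))).IsRoot x} := by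
    intro t ht
    have hev : (fun s => (Qpoly (m+1)).eval s) =ᶠ[nhds t] fun _ => (Qpoly (m+1)).eval a :=
      Filter.eventuallyEq_of_mem (isOpen_Ioo.mem_nhds ht)
        (fun y hy => hconst y (Ioo_subset_Icc_self hy))
    have h0 : deriv (fun s => (Qpoly (m+1)).eval s) t = 0 := by
      rw [hev.deriv_eq]; exact deriv_const t _
    rw [Polynomial.deriv, Qpoly_deriv] at h0
    simp only [eval_mul, eval_pow, eval_C, eval_X] at h0
    have ht0 : (0:ℝ) < t := lt_trans ha ht.1
    have : (derivative (hermiteH (m+1))).eval t ^ 2 = 0 := by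
      rcases mul_eq_zero.mp h0 with h | h
      · linarith
      · exact h
    have h2 : (derivative (hermiteH (m+1))).eval t = 0 :=
      pow_eq_zero_iff (n := 2) (by norm_num) |>.mp this
    exact h2
  have hPne : derivative (hermiteH (m+1)) ≠ 0 := by
    rw [hermiteH_deriv]
    refine mul_ne_zero (fun hC => ?_) (hermiteH_ne_zero m)
    rw [Polynomial.C_eq_zero] at hC
    have : (2*(m+1):ℕ) = 0 := by exact_mod_cast hC
    omega
  exact Set.not_infinite.mpr (Polynomial.finite_setOf_isRoot hPne)
    ((Set.Ioo_infinite hab).mono hsub)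

lemma key_pos (m : ℕ) (a b : ℝ) (ha : 0 < a) (hb : 0 < b)
    (hG : (Qpoly (m+1)).eval a = (Qpoly (m+1)).eval b) : a = b := by
  rcases lt_trichotomy a b with h | h | h
  · exact absurd (key_lt m a b ha h hG) (by simp)
  · exact h
  · exact absurd (key_lt m b a hb h hG.symm) (by simp)

lemma hermiteH_odd_eval_neg (k : ℕ) (z : ℝ) :
    (hermiteH (2*k+1)).eval (-z) = -(hermiteH (2*k+1)).eval z := by
  rw [hermiteH_eval_neg, Odd.neg_one_pow ⟨k, by ring⟩, neg_one_mul]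

lemma part1 (k : ℕ) (x y : ℝ)
    (hx : (hermiteH (2*k)).eval x = 0) (hy : (hermiteH (2*k)).eval y = 0)
    (hxy : (hermiteH (2*k+1)).eval x = (hermiteH (2*k+1)).eval y) : x = y := by
  have crit : ∀ z : ℝ, (hermiteH (2*k)).eval z = 0 →
      (derivative (hermiteH (2*k+1))).eval z = 0 := by
    intro z hz
    rw [show 2*k+1 = (2*k)+1 from rfl, hermiteH_deriv]
    simp [hz]
  have Qval : ∀ z : ℝ, (hermiteH (2*k)).eval z = 0 →
      (Qpoly (2*k+1)).eval z =
        ((2*(2*k+1):ℕ):ℝ) * (hermiteH (2*k+1)).eval z ^ 2 := by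
    intro z hz
    simp [Qpoly, crit z hz]
  have hneg : ∀ z : ℝ, (hermiteH (2*k)).eval z = 0 → (hermiteH (2*k)).eval (-z) = 0 := by
    intro z hz
    rw [hermiteH_eval_neg, hz, mul_zero]
  have hx0 : x ≠ 0 := fun h => hermiteH_even_eval_zero k (h ▸ hx)
  have hy0 : y ≠ 0 := fun h => hermiteH_even_eval_zero k (h ▸ hy)
  rcases hx0.lt_or_gt with hxn | hxp <;> rcases hy0.lt_or_gt with hyn | hyp
  · -- both negative
    have hG : (Qpoly (2*k+1)).eval (-x) = (Qpoly (2*k+1)).eval (-y) := by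
      rw [Qval _ (hneg x hx), Qval _ (hneg y hy), hermiteH_odd_eval_neg,
        hermiteH_odd_eval_neg, hxy]
    have := key_pos (2*k) (-x) (-y) (neg_pos.mpr hxn) (neg_pos.mpr hyn) hG
    exact neg_injective this
  · -- x < 0 < y
    have hG : (Qpoly (2*k+1)).eval (-x) = (Qpoly (2*k+1)).eval y := by
      rw [Qval _ (hneg x hx), Qval _ hy, hermiteH_odd_eval_neg, hxy]
      ring
    have hxy' : -x = y := key_pos (2*k) (-x) y (neg_pos.mpr hxn) hyp hG
    have hz : (hermiteH (2*k+1)).eval y = 0 := by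
      have h1 : (hermiteH (2*k+1)).eval y = -(hermiteH (2*k+1)).eval x := by
        rw [← hxy', hermiteH_odd_eval_neg]
      rw [hxy] at h1
      linarith
    exact absurd ⟨hy, hz⟩ (hermiteH_no_common_zero (2*k) y)
  · -- y < 0 < x
    have hG : (Qpoly (2*k+1)).eval x = (Qpoly (2*k+1)).eval (-y) := by
      rw [Qval _ hx, Qval _ (hneg y hy), hermiteH_odd_eval_neg, hxy]
      ring
    have hxy' : x = -y := key_pos (2*k) x (-y) hxp (neg_pos.mpr hyn) hG
    have hz : (hermiteH (2*k+1)).eval x = 0 := by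
      have h1 : (hermiteH (2*k+1)).eval x = -(hermiteH (2*k+1)).eval y := by
        rw [hxy', hermiteH_odd_eval_neg]
      rw [← hxy] at h1
      linarith
    exact absurd ⟨hx, hz⟩ (hermiteH_no_common_zero (2*k) x)
  · -- both positive
    have hG : (Qpoly (2*k+1)).eval x = (Qpoly (2*k+1)).eval y := by
      rw [Qval _ hx, Qval _ hy, hxy]
    exact key_pos (2*k) x y hxp hyp hG

/-- For odd `n ≥ 3`: if `H_{n-1}(x) = H_{n-1}(y) = 0` and
`H_n(x) = H_n(y)`, then `x = y`; consequently, every critical zero of `Ψ_n`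
lies on the diagonal. -/
theorem critical_zeros_of_Psi_on_diagonal (n : ℕ) (hn3 : 3 ≤ n) (hodd : Odd n) :
    (∀ x y : ℝ, (hermiteH (n - 1)).eval x = 0 → (hermiteH (n - 1)).eval y = 0 →
      (hermiteH n).eval x = (hermiteH n).eval y → x = y) ∧
    (∀ p : ℝ × ℝ, (Psi n p = 0 ∧ fderiv ℝ (Psi n) p = 0) → p.1 = p.2) := by
  obtain ⟨k, hk⟩ := hodd
  subst hk
  have hsub : 2*k+1-1 = 2*k := by omega
  rw [hsub]
  constructor
  · exact part1 k
  · rintro p ⟨hP, hD⟩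
    set H := hermiteH (2*k+1) with hH
    set dx := (derivative H).eval p.1 with hdx
    set dy := (derivative H).eval p.2 with hdy
    have h1 : HasDerivAt (fun t => H.eval t) dx p.1 := H.hasDerivAt p.1
    have h2 : HasDerivAt (fun t => H.eval t) dy p.2 := H.hasDerivAt p.2
    have hA : HasFDerivAt (fun q : ℝ × ℝ => H.eval q.1)
        (((1 : ℝ →L[ℝ] ℝ).smulRight dx).comp (ContinuousLinearMap.fst ℝ ℝ ℝ)) p :=
      h1.hasFDerivAt.comp p (ContinuousLinearMap.fst ℝ ℝ ℝ).hasFDerivAt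
    have hB : HasFDerivAt (fun q : ℝ × ℝ => H.eval q.2)
        (((1 : ℝ →L[ℝ] ℝ).smulRight dy).comp (ContinuousLinearMap.snd ℝ ℝ ℝ)) p :=
      h2.hasFDerivAt.comp p (ContinuousLinearMap.snd ℝ ℝ ℝ).hasFDerivAt
    have hPsi : HasFDerivAt (Psi (2*k+1))
        ((((1 : ℝ →L[ℝ] ℝ).smulRight dx).comp (ContinuousLinearMap.fst ℝ ℝ ℝ)) -
          (((1 : ℝ →L[ℝ] ℝ).smulRight dy).comp (ContinuousLinearMap.snd ℝ ℝ ℝ))) p :=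
      hA.sub hB
    have hF := hPsi.fderiv
    rw [hD] at hF
    have e1 := congrArg (fun L : (ℝ × ℝ) →L[ℝ] ℝ => L (1, 0)) hF
    have e2 := congrArg (fun L : (ℝ × ℝ) →L[ℝ] ℝ => L (0, 1)) hF
    simp only [ContinuousLinearMap.zero_apply, ContinuousLinearMap.sub_apply,
      ContinuousLinearMap.comp_apply, ContinuousLinearMap.coe_fst',
      ContinuousLinearMap.coe_snd', ContinuousLinearMap.smulRight_apply,
      ContinuousLinearMap.one_apply, smul_eq_mul, one_mul, zero_mul, mul_zero,
      sub_zero, zero_sub, neg_eq_zero] at e1 e2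
    -- e1 : 0 = dx, e2 : 0 = -dy (or similar)
    have hdx0 : dx = 0 := by simpa using e1.symm
    have hdy0 : dy = 0 := by simpa using e2.symm
    have hm1 : (hermiteH (2*k)).eval p.1 = 0 := by
      rw [hdx, hH, show 2*k+1 = (2*k)+1 from rfl, hermiteH_deriv] at hdx0
      simp only [eval_mul, eval_C] at hdx0
      rcases mul_eq_zero.mp hdx0 with h | h
      · exfalso
        have : (2*(2*k+1):ℕ) = 0 := by exact_mod_cast h
        omega
      · exact h
    have hm2 : (hermiteH (2*k)).eval p.2 = 0 := by
      rw [hdy, hH, show 2*k+1 = (2*k)+1 from rfl, hermiteH_deriv] at hdy0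
      simp only [eval_mul, eval_C] at hdy0
      rcases mul_eq_zero.mp hdy0 with h | h
      · exfalso
        have : (2*(2*k+1):ℕ) = 0 := by exact_mod_cast h
        omega
      · exact h
    have heq : (hermiteH (2*k+1)).eval p.1 = (hermiteH (2*k+1)).eval p.2 :=
      sub_eq_zero.mp hP
    exact part1 k p.1 p.2 hm1 hm2 heq
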